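/- Let β > 0, γ ≥ 0, μ ≥ 0, and let A(u,v) = μ·u(0)·v(0) + ∫₀^∞ u'v' dx + γ·∫₀^∞ uv dx. Define R_0 = l_0^{−1,β} and recursively R_k = l_k^{−1,β} − d_{k−1}·R_{k−1} with ρ_0 = μ + β/4 + γ/β, d_{k−1} = (β/4 − γ/β)/ρ_{k−1}, ρ_k = −d_{k−1}²·ρ_{k−1} + β/2 + 2γ/β. Then A(l_k^{−1,β}, R_m) = (β/4 − γ/β)·δ_{m,k−1} for all k > m ≥ 0. -/

import Mathlib

open Finset

/-- Generalized Laguerre polynomial `L_k^α(x)`, extended by `0` for negative index `k`. -/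
noncomputable def genLaguerre (α : ℝ) (k : ℤ) (x : ℝ) : ℝ :=
  if k < 0 then 0 else
    ∑ ν ∈ Finset.range (k.toNat + 1),
      (ascPochhammer ℝ (k.toNat - ν)).eval (α + ν + 1) /
        ((k.toNat - ν).factorial * ν.factorial) * (-x) ^ ν

/-- Generalized Laguerre function `l_k^{α,β}(x) = e^{-βx/2} L_k^α(βx)`. -/
noncomputable def genLaguerreFun (α β : ℝ) (k : ℤ) (x : ℝ) : ℝ :=
  Real.exp (-(β * x) / 2) * genLaguerre α k (β * x)

/-- The coercive bilinear form `A(u,v) = μ u(0) v(0) + (u',v') + γ (u,v)` on the half line. -/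
noncomputable def robinForm (γ μ : ℝ) (u v : ℝ → ℝ) : ℝ :=
  μ * u 0 * v 0 + (∫ x in Set.Ioi (0 : ℝ), deriv u x * deriv v x)
    + γ * ∫ x in Set.Ioi (0 : ℝ), u x * v x

/-- The normalization constants `ρ_k` of the Sobolev orthogonal Laguerre functions. -/
noncomputable def rhoR (β γ μ : ℝ) : ℕ → ℝ
  | 0 => μ + β / 4 + γ / β
  | k + 1 => -((β / 4 - γ / β) / rhoR β γ μ k) ^ 2 * rhoR β γ μ k + β / 2 + 2 * γ / β

/-- The Sobolev orthogonal Laguerre functions `R_k^β`,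
defined by `R_0 = l_0^{-1,β}` and `R_k = l_k^{-1,β} - d_{k-1} R_{k-1}`
with `d_{k-1} = (β/4 - γ/β)/ρ_{k-1}`. -/
noncomputable def Rfun (β γ μ : ℝ) : ℕ → ℝ → ℝ
  | 0 => genLaguerreFun (-1) β 0
  | k + 1 => fun x =>
      genLaguerreFun (-1) β (k + 1) x - ((β / 4 - γ / β) / rhoR β γ μ k) * Rfun β γ μ k x

namespace RobinAux

open MeasureTheory

noncomputable def lag (k : ℕ) (x : ℝ) : ℝ :=
  ∑ ν ∈ range (k+1), (-1 : ℝ)^ν * (k.choose ν : ℝ) / (Nat.factorial ν : ℝ) * x ^ ν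

noncomputable def lfun0 (β : ℝ) (k : ℕ) (x : ℝ) : ℝ :=
  Real.exp (-(β*x)/2) * lag k (β*x)

noncomputable def eps (k : ℕ) : ℝ := if k = 0 then 0 else 1

noncomputable def del (a b : ℕ) : ℝ := if a = b then 1 else 0

lemma altR (n : ℕ) : ∑ i ∈ range (n+1), (-1:ℝ)^i * (n.choose i : ℝ) = if n = 0 then 1 else 0 := by
  have h := Int.alternating_sum_range_choose (n := n)
  have h2 : ((∑ i ∈ range (n + 1), (-1:ℤ) ^ i * ↑(n.choose i) : ℤ) : ℝ)
      = ((if n = 0 then 1 else 0 : ℤ) : ℝ) := by rw [h]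
  push_cast at h2
  rw [h2]

lemma alt1 (m j : ℕ) :
    ∑ ν ∈ range (m+1), (-1:ℝ)^ν * (m.choose ν : ℝ) * (ν.choose j : ℝ)
      = if j = m then (-1:ℝ)^m else 0 := by
  by_cases hj : j ≤ m
  · rw [range_eq_Ico, ← Finset.sum_Ico_consecutive _ (Nat.zero_le j) (by omega : j ≤ m+1)]
    have h1 : ∑ ν ∈ Ico 0 j, (-1:ℝ)^ν * (m.choose ν : ℝ) * (ν.choose j : ℝ) = 0 := by
      apply Finset.sum_eq_zero
      intro ν hν
      rw [Finset.mem_Ico] at hν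
      rw [Nat.choose_eq_zero_of_lt hν.2]
      simp
    rw [h1, zero_add, Finset.sum_Ico_eq_sum_range]
    have h2 : ∀ i ∈ range (m + 1 - j), (-1:ℝ)^(j+i) * (m.choose (j+i) : ℝ) * ((j+i).choose j : ℝ)
        = ((-1:ℝ)^j * (m.choose j : ℝ)) * ((-1:ℝ)^i * ((m-j).choose i : ℝ)) := by
      intro i hi
      rw [Finset.mem_range] at hi
      have hle : j + i ≤ m := by omega
      have := Nat.choose_mul (n := m) (Nat.le_add_right j i)
      have h3 : (j+i) - j = i := by omega
      rw [h3] at this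
      have : ((m.choose (j+i) : ℝ)) * ((j+i).choose j : ℝ) = (m.choose j : ℝ) * ((m-j).choose i : ℝ) := by
        exact_mod_cast congrArg (Nat.cast : ℕ → ℝ) this
      rw [pow_add]
      calc (-1:ℝ)^j * (-1)^i * (m.choose (j+i) : ℝ) * ((j+i).choose j : ℝ)
          = (-1:ℝ)^j * (-1)^i * ((m.choose (j+i) : ℝ) * ((j+i).choose j : ℝ)) := by ring
        _ = (-1:ℝ)^j * (-1)^i * ((m.choose j : ℝ) * ((m-j).choose i : ℝ)) := by rw [this]
        _ = (-1:ℝ)^j * (m.choose j : ℝ) * ((-1:ℝ)^i * ((m-j).choose i : ℝ)) := by ring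
    rw [Finset.sum_congr rfl h2, ← Finset.mul_sum]
    have h4 : m + 1 - j = (m - j) + 1 := by omega
    rw [h4, altR]
    by_cases hjm : j = m
    · subst hjm; simp
    · have : m - j ≠ 0 := by omega
      simp [this, hjm]
  · have h1 : ∀ ν ∈ range (m+1), (-1:ℝ)^ν * (m.choose ν : ℝ) * (ν.choose j : ℝ) = 0 := by
      intro ν hν
      rw [Finset.mem_range] at hν
      rw [Nat.choose_eq_zero_of_lt (show ν < j by omega)]
      simp
    rw [Finset.sum_eq_zero h1, if_neg (by omega)]

lemma alt2 (k μ : ℕ) :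
    ∑ ν ∈ range (k+1), (-1:ℝ)^ν * (k.choose ν : ℝ) * ((ν+μ).choose μ : ℝ)
      = (-1:ℝ)^k * (μ.choose k : ℝ) := by
  have hvdm : ∀ ν, ((ν+μ).choose μ : ℝ)
      = ∑ ij ∈ Finset.HasAntidiagonal.antidiagonal μ, (μ.choose ij.1 : ℝ) * (ν.choose ij.2 : ℝ) := by
    intro ν
    rw [Nat.add_comm ν μ, Nat.add_choose_eq]
    push_cast
    rfl
  calc ∑ ν ∈ range (k+1), (-1:ℝ)^ν * (k.choose ν : ℝ) * ((ν+μ).choose μ : ℝ)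
      = ∑ ν ∈ range (k+1), ∑ ij ∈ Finset.HasAntidiagonal.antidiagonal μ,
          (μ.choose ij.1 : ℝ) * ((-1:ℝ)^ν * (k.choose ν : ℝ) * (ν.choose ij.2 : ℝ)) := by
        refine Finset.sum_congr rfl fun ν _ => ?_
        rw [hvdm, Finset.mul_sum]
        exact Finset.sum_congr rfl fun ij _ => by ring
    _ = ∑ ij ∈ Finset.HasAntidiagonal.antidiagonal μ, (μ.choose ij.1 : ℝ) *
          (∑ ν ∈ range (k+1), (-1:ℝ)^ν * (k.choose ν : ℝ) * (ν.choose ij.2 : ℝ)) := by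
        rw [Finset.sum_comm]
        exact Finset.sum_congr rfl fun ij _ => by rw [Finset.mul_sum]
    _ = ∑ ij ∈ Finset.HasAntidiagonal.antidiagonal μ, (μ.choose ij.1 : ℝ) *
          (if ij.2 = k then (-1:ℝ)^k else 0) := by
        exact Finset.sum_congr rfl fun ij _ => by rw [alt1]
    _ = ∑ i ∈ range (μ+1), (μ.choose i : ℝ) * (if μ - i = k then (-1:ℝ)^k else 0) :=
        Finset.Nat.sum_antidiagonal_eq_sum_range_succ
          (fun i j => (μ.choose i : ℝ) * (if j = k then (-1:ℝ)^k else 0)) μ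
    _ = (-1:ℝ)^k * (μ.choose k : ℝ) := by
        by_cases hk : k ≤ μ
        · have h1 : ∀ i ∈ range (μ+1), (μ.choose i : ℝ) * (if μ - i = k then (-1:ℝ)^k else 0)
              = if i = μ - k then (μ.choose (μ-k) : ℝ) * (-1:ℝ)^k else 0 := by
            intro i hi
            rw [Finset.mem_range] at hi
            by_cases h : i = μ - k
            · subst h; rw [if_pos rfl, if_pos (by omega)]
            · rw [if_neg h, if_neg (by omega), mul_zero]
          rw [Finset.sum_congr rfl h1, Finset.sum_ite_eq' (range (μ+1)) (μ-k),
            if_pos (by simp), Nat.choose_symm hk]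
          ring
        · have h1 : ∀ i ∈ range (μ+1), (μ.choose i : ℝ) * (if μ - i = k then (-1:ℝ)^k else 0)
              = 0 := by
            intro i hi
            rw [if_neg (by omega), mul_zero]
          rw [Finset.sum_eq_zero h1, Nat.choose_eq_zero_of_lt (by omega)]
          simp

lemma combo (a b : ℕ) :
    ∑ ν ∈ range (a+1), ∑ μ ∈ range (b+1),
      ((-1:ℝ)^ν * (a.choose ν : ℝ) / (Nat.factorial ν : ℝ)) * ((-1:ℝ)^μ * (b.choose μ : ℝ) / (Nat.factorial μ : ℝ))
        * (Nat.factorial (ν+μ) : ℝ)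
      = if a = b then 1 else 0 := by
  have key : ∀ ν μ : ℕ,
      ((-1:ℝ)^ν * (a.choose ν : ℝ) / (Nat.factorial ν : ℝ)) * ((-1:ℝ)^μ * (b.choose μ : ℝ) / (Nat.factorial μ : ℝ))
        * (Nat.factorial (ν+μ) : ℝ)
      = ((-1:ℝ)^ν * (a.choose ν : ℝ)) * ((-1:ℝ)^μ * (b.choose μ : ℝ) * ((μ+ν).choose ν : ℝ)) := by
    intro ν μ
    have h1 : ((μ+ν).choose ν : ℝ) = (Nat.factorial (ν+μ) : ℝ) / (Nat.factorial ν * Nat.factorial μ) := by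
      have h2 : ν + μ - ν = μ := by omega
      rw [Nat.add_comm μ ν, Nat.cast_choose ℝ (Nat.le_add_right ν μ), h2]
    rw [h1]
    have hν : (Nat.factorial ν : ℝ) ≠ 0 := by exact_mod_cast (Nat.factorial_pos ν).ne'
    have hμ : (Nat.factorial μ : ℝ) ≠ 0 := by exact_mod_cast (Nat.factorial_pos μ).ne'
    field_simp
  calc ∑ ν ∈ range (a+1), ∑ μ ∈ range (b+1),
      ((-1:ℝ)^ν * (a.choose ν : ℝ) / (Nat.factorial ν : ℝ)) * ((-1:ℝ)^μ * (b.choose μ : ℝ) / (Nat.factorial μ : ℝ))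
        * (Nat.factorial (ν+μ) : ℝ)
      = ∑ ν ∈ range (a+1), ((-1:ℝ)^ν * (a.choose ν : ℝ)) *
          (∑ μ ∈ range (b+1), (-1:ℝ)^μ * (b.choose μ : ℝ) * ((μ+ν).choose ν : ℝ)) := by
        refine Finset.sum_congr rfl fun ν _ => ?_
        rw [Finset.mul_sum]
        exact Finset.sum_congr rfl fun μ _ => key ν μ
    _ = ∑ ν ∈ range (a+1), ((-1:ℝ)^ν * (a.choose ν : ℝ)) * ((-1:ℝ)^b * (ν.choose b : ℝ)) := by
        refine Finset.sum_congr rfl fun ν _ => ?_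
        rw [alt2 b ν]
    _ = (-1:ℝ)^b * ∑ ν ∈ range (a+1), (-1:ℝ)^ν * (a.choose ν : ℝ) * (ν.choose b : ℝ) := by
        rw [Finset.mul_sum]
        exact Finset.sum_congr rfl fun ν _ => by ring
    _ = if a = b then 1 else 0 := by
        rw [alt1 a b]
        by_cases h : a = b
        · subst h; rw [if_pos rfl, if_pos rfl, ← pow_add]
          simp [pow_mul]
        · rw [if_neg (fun hh => h hh.symm), if_neg h, mul_zero]

lemma mono_integrable {β : ℝ} (hβ : 0 < β) (n : ℕ) :
    IntegrableOn (fun x : ℝ => Real.exp (-(β*x)) * (β*x)^n) (Set.Ioi 0) := by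
  have hn : (-1:ℝ) < (n:ℝ) := lt_of_lt_of_le neg_one_lt_zero (Nat.cast_nonneg n)
  have h := integrableOn_rpow_mul_exp_neg_mul_rpow (p := 1) (s := (n:ℝ)) (b := β) hn one_pos hβ
  have h2 : IntegrableOn (fun x : ℝ => x ^ (n:ℝ) * Real.exp (-β * x)) (Set.Ioi 0) := by
    refine h.congr_fun (fun x hx => ?_) measurableSet_Ioi
    simp [Real.rpow_one]
  have h3 : IntegrableOn (fun x : ℝ => β^n * (x ^ (n:ℝ) * Real.exp (-β * x))) (Set.Ioi 0) :=
    h2.const_mul (β^n)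
  refine h3.congr_fun (fun x hx => ?_) measurableSet_Ioi
  beta_reduce
  rw [Real.rpow_natCast, mul_pow, neg_mul]
  ring

lemma mono_integral {β : ℝ} (hβ : 0 < β) (n : ℕ) :
    ∫ x in Set.Ioi (0:ℝ), Real.exp (-(β*x)) * (β*x)^n = (Nat.factorial n : ℝ)/β := by
  have h := Real.integral_rpow_mul_exp_neg_mul_Ioi (a := (n:ℝ)+1) (r := β) (by positivity) hβ
  have h2 : ∀ x ∈ Set.Ioi (0:ℝ),
      Real.exp (-(β*x)) * (β*x)^n = β^n * (x ^ (((n:ℝ)+1)-1) * Real.exp (-(β*x))) := by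
    intro x hx
    have he : ((n:ℝ)+1)-1 = ((n:ℕ):ℝ) := by ring
    rw [he, Real.rpow_natCast, mul_pow]
    ring
  rw [setIntegral_congr_fun measurableSet_Ioi h2, integral_const_mul, h]
  have he2 : ((n:ℝ)+1) = (((n+1:ℕ)):ℝ) := by push_cast; ring
  rw [Real.Gamma_nat_eq_factorial, he2, Real.rpow_natCast]
  rw [div_pow, one_pow]
  field_simp
  ring

lemma prod_expand (β : ℝ) (a b : ℕ) (x : ℝ) :
    lfun0 β a x * lfun0 β b x
      = ∑ ν ∈ range (a+1), ∑ μ ∈ range (b+1),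
          (((-1:ℝ)^ν * (a.choose ν : ℝ) / (Nat.factorial ν : ℝ)) * ((-1:ℝ)^μ * (b.choose μ : ℝ) / (Nat.factorial μ : ℝ)))
            * (Real.exp (-(β*x)) * (β*x)^(ν+μ)) := by
  unfold lfun0 lag
  have hexp : Real.exp (-(β*x)/2) * Real.exp (-(β*x)/2) = Real.exp (-(β*x)) := by
    rw [← Real.exp_add]; ring_nf
  calc (Real.exp (-(β*x)/2) * ∑ ν ∈ range (a+1), (-1:ℝ)^ν * (a.choose ν : ℝ) / (Nat.factorial ν : ℝ) * (β*x)^ν)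
        * (Real.exp (-(β*x)/2) * ∑ μ ∈ range (b+1), (-1:ℝ)^μ * (b.choose μ : ℝ) / (Nat.factorial μ : ℝ) * (β*x)^μ)
      = Real.exp (-(β*x)) * ((∑ ν ∈ range (a+1), (-1:ℝ)^ν * (a.choose ν : ℝ) / (Nat.factorial ν : ℝ) * (β*x)^ν)
        * (∑ μ ∈ range (b+1), (-1:ℝ)^μ * (b.choose μ : ℝ) / (Nat.factorial μ : ℝ) * (β*x)^μ)) := by
        rw [← hexp]; ring
    _ = _ := by
        rw [Finset.sum_mul_sum, Finset.mul_sum]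
        refine Finset.sum_congr rfl fun ν _ => ?_
        rw [Finset.mul_sum]
        refine Finset.sum_congr rfl fun μ _ => ?_
        rw [pow_add]
        ring

lemma lfun0_mul_integrable {β : ℝ} (hβ : 0 < β) (a b : ℕ) :
    IntegrableOn (fun x => lfun0 β a x * lfun0 β b x) (Set.Ioi 0) := by
  have : (fun x => lfun0 β a x * lfun0 β b x)
      = fun x => ∑ ν ∈ range (a+1), ∑ μ ∈ range (b+1),
          (((-1:ℝ)^ν * (a.choose ν : ℝ) / (Nat.factorial ν : ℝ)) * ((-1:ℝ)^μ * (b.choose μ : ℝ) / (Nat.factorial μ : ℝ)))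
            * (Real.exp (-(β*x)) * (β*x)^(ν+μ)) := funext (prod_expand β a b)
  rw [this]
  apply integrable_finset_sum
  intro ν _
  apply integrable_finset_sum
  intro μ _
  exact (mono_integrable hβ (ν+μ)).const_mul _

lemma lfun0_mul_integral {β : ℝ} (hβ : 0 < β) (a b : ℕ) :
    ∫ x in Set.Ioi (0:ℝ), lfun0 β a x * lfun0 β b x = del a b / β := by
  have h1 : ∫ x in Set.Ioi (0:ℝ), lfun0 β a x * lfun0 β b x
      = ∑ ν ∈ range (a+1), ∑ μ ∈ range (b+1),
          (((-1:ℝ)^ν * (a.choose ν : ℝ) / (Nat.factorial ν : ℝ)) * ((-1:ℝ)^μ * (b.choose μ : ℝ) / (Nat.factorial μ : ℝ)))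
            * ((Nat.factorial (ν+μ) : ℝ)/β) := by
    rw [show (fun x => lfun0 β a x * lfun0 β b x)
      = fun x => ∑ ν ∈ range (a+1), ∑ μ ∈ range (b+1),
          (((-1:ℝ)^ν * (a.choose ν : ℝ) / (Nat.factorial ν : ℝ)) * ((-1:ℝ)^μ * (b.choose μ : ℝ) / (Nat.factorial μ : ℝ)))
            * (Real.exp (-(β*x)) * (β*x)^(ν+μ)) from funext (prod_expand β a b)]
    rw [integral_finset_sum _ (fun ν _ => integrable_finset_sum _
      (fun μ _ => (mono_integrable hβ (ν+μ)).const_mul _))]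
    refine Finset.sum_congr rfl fun ν _ => ?_
    rw [integral_finset_sum _ (fun μ _ => (mono_integrable hβ (ν+μ)).const_mul _)]
    refine Finset.sum_congr rfl fun μ _ => ?_
    rw [integral_const_mul, mono_integral hβ]
  rw [h1]
  have h2 : ∀ ν ∈ range (a+1), ∀ μ ∈ range (b+1),
      (((-1:ℝ)^ν * (a.choose ν : ℝ) / (Nat.factorial ν : ℝ)) * ((-1:ℝ)^μ * (b.choose μ : ℝ) / (Nat.factorial μ : ℝ)))
        * ((Nat.factorial (ν+μ) : ℝ)/β)
      = (((-1:ℝ)^ν * (a.choose ν : ℝ) / (Nat.factorial ν : ℝ)) * ((-1:ℝ)^μ * (b.choose μ : ℝ) / (Nat.factorial μ : ℝ))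
        * (Nat.factorial (ν+μ) : ℝ)) / β := by
    intro ν _ μ _; ring
  rw [Finset.sum_congr rfl (fun ν hν => Finset.sum_congr rfl (fun μ hμ => h2 ν hν μ hμ))]
  simp only [← Finset.sum_div]
  rw [combo a b]
  unfold del
  rfl

lemma pair_integrable {β : ℝ} (hβ : 0 < β) (a a' b b' : ℕ) (s t : ℝ) :
    IntegrableOn (fun x => (lfun0 β a x + s * lfun0 β a' x) * (lfun0 β b x + t * lfun0 β b' x))
      (Set.Ioi 0) := by
  have : (fun x => (lfun0 β a x + s * lfun0 β a' x) * (lfun0 β b x + t * lfun0 β b' x))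
      = fun x => (lfun0 β a x * lfun0 β b x) + t * (lfun0 β a x * lfun0 β b' x)
          + s * (lfun0 β a' x * lfun0 β b x) + (s*t) * (lfun0 β a' x * lfun0 β b' x) := by
    funext x; ring
  rw [this]
  exact (((lfun0_mul_integrable hβ a b).add
    ((lfun0_mul_integrable hβ a b').const_mul t)).add
    ((lfun0_mul_integrable hβ a' b).const_mul s)).add
    ((lfun0_mul_integrable hβ a' b').const_mul (s*t))

lemma pair_integral {β : ℝ} (hβ : 0 < β) (a a' b b' : ℕ) (s t : ℝ) :
    ∫ x in Set.Ioi (0:ℝ), (lfun0 β a x + s * lfun0 β a' x) * (lfun0 β b x + t * lfun0 β b' x)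
      = (del a b + s * del a' b + t * del a b' + s * t * del a' b') / β := by
  have h : (fun x => (lfun0 β a x + s * lfun0 β a' x) * (lfun0 β b x + t * lfun0 β b' x))
      = fun x => ((lfun0 β a x * lfun0 β b x) + t * (lfun0 β a x * lfun0 β b' x))
          + ((s * (lfun0 β a' x * lfun0 β b x) + (s*t) * (lfun0 β a' x * lfun0 β b' x))) := by
    funext x; ring
  rw [h]
  have J1 : IntegrableOn (fun x => lfun0 β a x * lfun0 β b x + t * (lfun0 β a x * lfun0 β b' x)) (Set.Ioi 0) :=
    (lfun0_mul_integrable hβ a b).add ((lfun0_mul_integrable hβ a b').const_mul t)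
  have J2 : IntegrableOn (fun x => s * (lfun0 β a' x * lfun0 β b x) + (s*t) * (lfun0 β a' x * lfun0 β b' x)) (Set.Ioi 0) :=
    ((lfun0_mul_integrable hβ a' b).const_mul s).add ((lfun0_mul_integrable hβ a' b').const_mul (s*t))
  rw [integral_add J1 J2]
  rw [integral_add (lfun0_mul_integrable hβ a b) ((lfun0_mul_integrable hβ a b').const_mul t)]
  rw [integral_add ((lfun0_mul_integrable hβ a' b).const_mul s) ((lfun0_mul_integrable hβ a' b').const_mul (s*t))]
  rw [integral_const_mul, integral_const_mul, integral_const_mul]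
  rw [lfun0_mul_integral hβ a b, lfun0_mul_integral hβ a b', lfun0_mul_integral hβ a' b,
    lfun0_mul_integral hβ a' b']
  field_simp
  ring

lemma pochval (n ν : ℕ) : (ascPochhammer ℝ n).eval ((ν:ℕ):ℝ) = (ν.ascFactorial n : ℝ) := by
  rw [← ascPochhammer_eval_cast, ascPochhammer_nat_eq_ascFactorial]

lemma glp (k : ℕ) (t : ℝ) :
    genLaguerre (-1) (k : ℤ) t = lag k t - eps k * lag (k-1) t := by
  cases k with
  | zero =>
    simp [genLaguerre, lag, eps]
  | succ j =>
    have h0 : ¬ ((j+1 : ℕ) : ℤ) < 0 := by omega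
    have htn : ((j+1 : ℕ) : ℤ).toNat = j+1 := rfl
    rw [genLaguerre, if_neg h0, htn]
    have heps : eps (j+1) = 1 := by simp [eps]
    have hsub : (j+1) - 1 = j := rfl
    rw [heps, hsub, one_mul]
    -- pad lag j to range (j+2)
    have hpad : lag j t = ∑ ν ∈ range (j+2),
        (-1 : ℝ)^ν * (j.choose ν : ℝ) / (Nat.factorial ν : ℝ) * t ^ ν := by
      rw [lag, Finset.sum_range_succ (n := j+1)]
      rw [Nat.choose_succ_self]
      simp
    rw [hpad, lag, ← Finset.sum_sub_distrib]
    refine Finset.sum_congr rfl fun ν hν => ?_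
    rw [Finset.mem_range] at hν
    have harg : (-1 : ℝ) + (ν:ℝ) + 1 = ((ν:ℕ):ℝ) := by ring
    rw [harg, pochval]
    cases ν with
    | zero =>
      rw [Nat.sub_zero, Nat.zero_ascFactorial j]
      simp
    | succ i =>
      have hle : i ≤ j := by omega
      have hsub2 : j + 1 - (i+1) = j - i := by omega
      rw [hsub2]
      have hfact : (Nat.factorial i : ℝ) * ((i+1).ascFactorial (j-i) : ℝ) = (Nat.factorial j : ℝ) := by
        rw [← Nat.cast_mul, Nat.factorial_mul_ascFactorial]
        have hij : i + (j - i) = j := by omega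
        rw [hij]
      have hif : (Nat.factorial i : ℝ) ≠ 0 := by exact_mod_cast (Nat.factorial_pos i).ne'
      have hcmf : (j.choose i : ℝ) * (Nat.factorial i : ℝ) * (Nat.factorial (j-i) : ℝ)
          = (Nat.factorial j : ℝ) := by
        rw [← Nat.cast_mul, ← Nat.cast_mul, Nat.choose_mul_factorial_mul_factorial hle]
      have hasc : ((i+1).ascFactorial (j-i) : ℝ)
          = (j.choose i : ℝ) * (Nat.factorial (j-i) : ℝ) := by
        have h9 : (Nat.factorial i : ℝ) * ((i+1).ascFactorial (j-i) : ℝ)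
            = (Nat.factorial i : ℝ) * ((j.choose i : ℝ) * (Nat.factorial (j-i) : ℝ)) := by
          rw [hfact, ← hcmf]; ring
        exact mul_left_cancel₀ hif h9
      rw [hasc]
      have hpascal : ((j+1).choose (i+1) : ℝ) = (j.choose i : ℝ) + (j.choose (i+1) : ℝ) := by
        rw [← Nat.cast_add, Nat.choose_succ_succ']
      rw [hpascal]
      have hneg : (-t)^(i+1) = (-1:ℝ)^(i+1) * t^(i+1) := by
        rw [neg_pow]
      rw [hneg]
      have h1 : (Nat.factorial (j-i) : ℝ) ≠ 0 := by exact_mod_cast (Nat.factorial_pos _).ne'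
      have h2 : (Nat.factorial (i+1) : ℝ) ≠ 0 := by exact_mod_cast (Nat.factorial_pos _).ne'
      field_simp
      ring

lemma gl_eq (β : ℝ) (k : ℕ) (x : ℝ) :
    genLaguerreFun (-1) β (k : ℤ) x = lfun0 β k x - eps k * lfun0 β (k-1) x := by
  rw [genLaguerreFun, glp, lfun0, lfun0]
  ring

lemma lag_zero (k : ℕ) : lag k 0 = 1 := by
  rw [lag]
  rw [Finset.sum_eq_single_of_mem 0 (Finset.mem_range.mpr (by omega))]
  · simp
  · intro ν _ hν
    rw [zero_pow hν, mul_zero]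

lemma gl_zero_val (β : ℝ) (k : ℕ) (hk : 1 ≤ k) : genLaguerreFun (-1) β (k : ℤ) 0 = 0 := by
  rw [gl_eq, lfun0, lfun0, mul_zero, lag_zero, lag_zero]
  have : eps k = 1 := by unfold eps; rw [if_neg (by omega)]
  rw [this]
  simp

lemma hasDerivAt_lag_comp (β : ℝ) (K : ℕ) (x : ℝ) :
    HasDerivAt (fun y => lag K (β*y))
      (∑ ν ∈ range (K+1),
        (-1 : ℝ)^ν * (K.choose ν : ℝ) / (Nat.factorial ν : ℝ) * ((ν:ℝ) * (β*x)^(ν-1) * β)) x := by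
  have h : ∀ ν ∈ range (K+1), HasDerivAt (fun y => (-1 : ℝ)^ν * (K.choose ν : ℝ) / (Nat.factorial ν : ℝ) * (β*y)^ν)
      ((-1 : ℝ)^ν * (K.choose ν : ℝ) / (Nat.factorial ν : ℝ) * ((ν:ℝ) * (β*x)^(ν-1) * β)) x := by
    intro ν _
    have hβy : HasDerivAt (fun y : ℝ => β * y) β x := by
      simpa using (hasDerivAt_id x).const_mul β
    exact (hβy.pow ν).const_mul _
  have := HasDerivAt.fun_sum h
  exact this

lemma Dsum (β : ℝ) (k : ℕ) (t : ℝ) :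
    (∑ ν ∈ range (k+2), (-1 : ℝ)^ν * ((k+1).choose ν : ℝ) / (Nat.factorial ν : ℝ) * ((ν:ℝ) * t^(ν-1) * β))
      - (∑ ν ∈ range (k+1), (-1 : ℝ)^ν * (k.choose ν : ℝ) / (Nat.factorial ν : ℝ) * ((ν:ℝ) * t^(ν-1) * β))
      = -β * lag k t := by
  have hext : ∑ ν ∈ range (k+2), (-1 : ℝ)^ν * (k.choose ν : ℝ) / (Nat.factorial ν : ℝ) * ((ν:ℝ) * t^(ν-1) * β)
      = ∑ ν ∈ range (k+1), (-1 : ℝ)^ν * (k.choose ν : ℝ) / (Nat.factorial ν : ℝ) * ((ν:ℝ) * t^(ν-1) * β) := by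
    rw [Finset.sum_range_succ, Nat.choose_succ_self]
    simp
  rw [← hext, ← Finset.sum_sub_distrib, lag, Finset.mul_sum]
  rw [Finset.sum_range_succ' _ (k+1)]
  have hzero : (-1 : ℝ)^0 * ((k+1).choose 0 : ℝ) / (Nat.factorial 0 : ℝ) * ((0:ℕ):ℝ) * (t^(0-1)) * β
      - 0 = 0 := by simp
  have hstep : ∀ i ∈ range (k+1),
      ((-1 : ℝ)^(i+1) * ((k+1).choose (i+1) : ℝ) / (Nat.factorial (i+1) : ℝ) * (((i+1:ℕ):ℝ) * t^((i+1)-1) * β)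
        - (-1 : ℝ)^(i+1) * (k.choose (i+1) : ℝ) / (Nat.factorial (i+1) : ℝ) * (((i+1:ℕ):ℝ) * t^((i+1)-1) * β))
      = -β * ((-1 : ℝ)^i * (k.choose i : ℝ) / (Nat.factorial i : ℝ) * t ^ i) := by
    intro i _
    have hpascal : ((k+1).choose (i+1) : ℝ) = (k.choose i : ℝ) + (k.choose (i+1) : ℝ) := by
      rw [← Nat.cast_add, Nat.choose_succ_succ']
    have hfs : (Nat.factorial (i+1) : ℝ) = ((i+1:ℕ):ℝ) * (Nat.factorial i : ℝ) := by
      rw [← Nat.cast_mul, Nat.factorial_succ]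
    have hsub : (i+1) - 1 = i := rfl
    rw [hpascal, hfs, hsub, pow_succ]
    have h1 : (Nat.factorial i : ℝ) ≠ 0 := by exact_mod_cast (Nat.factorial_pos _).ne'
    have h2 : ((i+1:ℕ):ℝ) ≠ 0 := by positivity
    field_simp
    ring
  rw [Finset.sum_congr rfl hstep]
  simp

lemma hasDerivAt_exp_part (β : ℝ) (x : ℝ) :
    HasDerivAt (fun y => Real.exp (-(β*y)/2)) (-(β/2) * Real.exp (-(β*x)/2)) x := by
  have h1 : HasDerivAt (fun y : ℝ => -(β*y)/2) (-(β/2)) x := by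
    have h0 := ((hasDerivAt_id x).const_mul β).neg.div_const 2
    have he : -(β/2) = -(β * 1)/2 := by ring
    rw [he]
    exact h0
  have := h1.exp
  simpa [mul_comm] using this

lemma gl_hasDeriv (β : ℝ) (k : ℕ) (x : ℝ) :
    HasDerivAt (genLaguerreFun (-1) β (k : ℤ))
      (-(β/2) * (lfun0 β k x + eps k * lfun0 β (k-1) x)) x := by
  have hfun : genLaguerreFun (-1) β (k:ℤ)
      = fun y => Real.exp (-(β*y)/2) * (lag k (β*y) - eps k * lag (k-1) (β*y)) := by
    funext y
    rw [gl_eq, lfun0, lfun0]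
    ring
  rw [hfun]
  cases k with
  | zero =>
    have heps : eps 0 = 0 := by simp [eps]
    have hpoly : HasDerivAt (fun y => lag 0 (β*y) - eps 0 * lag (0-1) (β*y))
        (∑ ν ∈ range (0+1), (-1 : ℝ)^ν * ((0:ℕ).choose ν : ℝ) / (Nat.factorial ν : ℝ) * ((ν:ℝ) * (β*x)^(ν-1) * β)) x := by
      have := hasDerivAt_lag_comp β 0 x
      simp only [heps, zero_mul, sub_zero]
      exact this
    have := (hasDerivAt_exp_part β x).fun_mul hpoly
    refine this.congr_deriv ?_
    symm
    simp [heps, lfun0]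
    ring
  | succ j =>
    have heps : eps (j+1) = 1 := by simp [eps]
    have hsub : (j+1) - 1 = j := rfl
    have hpoly : HasDerivAt (fun y => lag (j+1) (β*y) - eps (j+1) * lag ((j+1)-1) (β*y))
        (-β * lag j (β*x)) x := by
      simp only [heps, hsub, one_mul]
      have h2 := (hasDerivAt_lag_comp β (j+1) x).sub (hasDerivAt_lag_comp β j x)
      have h3 := Dsum β j (β*x)
      rw [show j + 1 + 1 = j + 2 from rfl] at h2
      rw [h3] at h2
      exact h2
    have := (hasDerivAt_exp_part β x).fun_mul hpoly
    refine this.congr_deriv ?_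
    symm
    rw [heps, hsub, lfun0, lfun0]
    ring

lemma Rfun_repr (β γ μ : ℝ) (m : ℕ) :
    ∃ e : ℕ → ℝ, e m = 1 ∧
      ∀ x, Rfun β γ μ m x = ∑ j ∈ range (m+1), e j * genLaguerreFun (-1) β (j : ℤ) x := by
  induction m with
  | zero =>
    refine ⟨fun _ => 1, rfl, fun x => ?_⟩
    simp [Rfun]
  | succ n ih =>
    obtain ⟨e, he, hrep⟩ := ih
    refine ⟨fun j => if j = n+1 then 1 else -((β/4 - γ/β)/rhoR β γ μ n) * e j, by simp, fun x => ?_⟩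
    have hdef : Rfun β γ μ (n+1) x
        = genLaguerreFun (-1) β ((n:ℤ) + 1) x - ((β/4 - γ/β)/rhoR β γ μ n) * Rfun β γ μ n x := rfl
    rw [hdef, Finset.sum_range_succ]
    have hb : ((fun j => if j = n+1 then (1:ℝ) else -((β/4 - γ/β)/rhoR β γ μ n) * e j) (n+1)) = 1 := by
      simp
    rw [hb, one_mul]
    have hcast : ((n:ℤ) + 1) = (((n+1:ℕ)):ℤ) := by push_cast; ring
    rw [hcast]
    have hsum : ∑ j ∈ range (n+1),
        (if j = n+1 then (1:ℝ) else -((β/4 - γ/β)/rhoR β γ μ n) * e j) * genLaguerreFun (-1) β (j:ℤ) x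
        = -((β/4 - γ/β)/rhoR β γ μ n) * ∑ j ∈ range (n+1), e j * genLaguerreFun (-1) β (j:ℤ) x := by
      rw [Finset.mul_sum]
      refine Finset.sum_congr rfl fun j hj => ?_
      rw [Finset.mem_range] at hj
      rw [if_neg (by omega)]
      ring
    rw [hsum, ← hrep]
    ring


end RobinAux

open RobinAux MeasureTheory in
theorem robinForm_laguerre_Rfun (β γ μ : ℝ) (hβ : 0 < β) (hγ : 0 ≤ γ) (hμ : 0 ≤ μ)
    (k m : ℕ) (hmk : m < k) :
    robinForm γ μ (genLaguerreFun (-1) β k) (Rfun β γ μ m)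
      = (β / 4 - γ / β) * (if m + 1 = k then 1 else 0) := by
  obtain ⟨e, hem, hrep⟩ := Rfun_repr β γ μ m
  have hk1 : 1 ≤ k := by omega
  have hβ0 : β ≠ 0 := hβ.ne'
  -- derivative of u
  have hdu : deriv (genLaguerreFun (-1) β (k:ℤ))
      = fun x => -(β/2) * (lfun0 β k x + eps k * lfun0 β (k-1) x) :=
    funext fun x => (gl_hasDeriv β k x).deriv
  -- Rfun as a sum
  have hRfun : Rfun β γ μ m
      = fun x => ∑ j ∈ range (m+1), e j * genLaguerreFun (-1) β (j:ℤ) x := funext hrep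
  have hdS : deriv (Rfun β γ μ m)
      = fun x => ∑ j ∈ range (m+1), e j * (-(β/2) * (lfun0 β j x + eps j * lfun0 β (j-1) x)) := by
    rw [hRfun]
    funext x
    exact (HasDerivAt.fun_sum fun j _ => ((gl_hasDeriv β j x).const_mul (e j))).deriv
  -- delta simplifications
  have hdd : ∀ j, j < k →
      del k j + eps k * del (k-1) j + eps j * del k (j-1) + eps k * eps j * del (k-1) (j-1)
        = (if j + 1 = k then 1 else 0) := by
    intro j hjk
    unfold del eps
    split_ifs <;> first | (exfalso; omega) | norm_num
  have huv : ∀ j, j < k →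
      del k j + (-eps k) * del (k-1) j + (-eps j) * del k (j-1)
          + (-eps k) * (-eps j) * del (k-1) (j-1)
        = -(if j + 1 = k then 1 else 0) := by
    intro j hjk
    unfold del eps
    split_ifs <;> first | (exfalso; omega) | norm_num
  -- the three pieces
  have hpiece0 : μ * genLaguerreFun (-1) β (k:ℤ) 0 * Rfun β γ μ m 0 = 0 := by
    rw [gl_zero_val β k hk1]
    ring
  -- derivative integral
  have hI1 : ∫ x in Set.Ioi (0:ℝ), deriv (genLaguerreFun (-1) β (k:ℤ)) x * deriv (Rfun β γ μ m) x
      = ∑ j ∈ range (m+1), e j * ((β/4) * (if j + 1 = k then 1 else 0)) := by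
    rw [hdu, hdS]
    have hfun1 : (fun x => (-(β/2) * (lfun0 β k x + eps k * lfun0 β (k-1) x))
          * (∑ j ∈ range (m+1), e j * (-(β/2) * (lfun0 β j x + eps j * lfun0 β (j-1) x))))
        = fun x => ∑ j ∈ range (m+1), (e j * (β^2/4))
            * ((lfun0 β k x + eps k * lfun0 β (k-1) x) * (lfun0 β j x + eps j * lfun0 β (j-1) x)) := by
      funext x
      rw [Finset.mul_sum]
      refine Finset.sum_congr rfl fun j _ => ?_
      ring
    rw [hfun1]
    rw [integral_finset_sum _ (fun j _ =>
      (pair_integrable hβ k (k-1) j (j-1) (eps k) (eps j)).const_mul _)]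
    refine Finset.sum_congr rfl fun j hj => ?_
    rw [Finset.mem_range] at hj
    rw [integral_const_mul, pair_integral hβ k (k-1) j (j-1) (eps k) (eps j), hdd j (by omega)]
    field_simp
  -- mass integral
  have hI2 : ∫ x in Set.Ioi (0:ℝ), genLaguerreFun (-1) β (k:ℤ) x * Rfun β γ μ m x
      = ∑ j ∈ range (m+1), e j * (-(1/β) * (if j + 1 = k then 1 else 0)) := by
    rw [hRfun]
    have hfun2 : (fun x => genLaguerreFun (-1) β (k:ℤ) x
          * (∑ j ∈ range (m+1), e j * genLaguerreFun (-1) β (j:ℤ) x))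
        = fun x => ∑ j ∈ range (m+1), e j
            * ((lfun0 β k x + (-eps k) * lfun0 β (k-1) x) * (lfun0 β j x + (-eps j) * lfun0 β (j-1) x)) := by
      funext x
      rw [Finset.mul_sum]
      refine Finset.sum_congr rfl fun j _ => ?_
      rw [gl_eq β k, gl_eq β j]
      ring
    rw [hfun2]
    rw [integral_finset_sum _ (fun j _ =>
      (pair_integrable hβ k (k-1) j (j-1) (-eps k) (-eps j)).const_mul _)]
    refine Finset.sum_congr rfl fun j hj => ?_
    rw [Finset.mem_range] at hj
    rw [integral_const_mul, pair_integral hβ k (k-1) j (j-1) (-eps k) (-eps j), huv j (by omega)]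
    field_simp
  -- assemble
  rw [robinForm, hpiece0, hI1, hI2]
  have hsum : ∀ c : ℝ, ∑ j ∈ range (m+1), e j * (c * (if j + 1 = k then 1 else 0))
      = c * (if m + 1 = k then 1 else 0) := by
    intro c
    by_cases hk : m + 1 = k
    · rw [Finset.sum_eq_single m]
      · rw [hem, if_pos hk]; ring
      · intro j hj hne
        rw [Finset.mem_range] at hj
        rw [if_neg (by omega)]
        ring
      · intro h
        exact absurd (Finset.mem_range.mpr (by omega)) h
    · rw [if_neg hk, Finset.sum_eq_zero, mul_zero]
      intro j hj
      rw [Finset.mem_range] at hj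
      rw [if_neg (by omega)]
      ring
  rw [hsum (β/4), hsum (-(1/β))]
  by_cases hk : m + 1 = k
  · rw [if_pos hk]
    field_simp
    ring
  · rw [if_neg hk]
    ring
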